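/- Let 𝒢 be a partition of [n], Π ≤ S_n the group of permutations fixing each block of 𝒢 setwise, α ∈ ℝ^n, β ∈ ℝ, and (ẑ, x̂) ∈ {0,1}^n × ℝ. For each G ∈ 𝒢 and k ∈ [|G|], let ζ^k_G = 1 iff ∑_{j∈G} ẑ_j ≥ k, and let α^k_G be the k-th largest value of {α_j : j ∈ G}. Then (ẑ, x̂) satisfies ⟨π⁻¹(α), ẑ⟩ + β ≤ x̂ for all π ∈ Π if and only if ∑_{G∈𝒢} ∑_{k=1}^{|G|} α^k_G ζ^k_G + β ≤ x̂. -/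

import Mathlib

def permAct {n : ℕ} (π : Equiv.Perm (Fin n)) (x : Fin n → ℝ) : Fin n → ℝ :=
  fun i => x (π⁻¹ i)

/-- The entries of `v` restricted to `G`, listed in non-increasing order. -/
noncomputable def descList {n : ℕ} (v : Fin n → ℝ) (G : Finset (Fin n)) : List ℝ :=
  ((G.1.map v).sort (· ≤ ·)).reverse


lemma sum_take_eq_range (l : List ℝ) (m : ℕ) :
    (l.take m).sum = ∑ k ∈ Finset.range m, l.getD k 0 := by
  induction l generalizing m with
  | nil => simp
  | cons a l ih =>
    cases m with
    | zero => simp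
    | succ m =>
      rw [List.take_succ_cons, List.sum_cons, Finset.sum_range_succ', ih]
      simp [add_comm]

lemma sum_le_take (l : List ℝ) (hl : l.Pairwise (fun a b : ℝ => b ≤ a)) :
    ∀ s : Multiset ℝ, s ≤ ↑l → s.sum ≤ (l.take (Multiset.card s)).sum := by
  induction l with
  | nil =>
    intro s hs
    have : s = 0 := Multiset.le_zero.mp (by simpa using hs)
    simp [this]
  | cons b l ih =>
    intro s hs
    have hlb : ∀ x ∈ l, x ≤ b := fun x hx => (List.pairwise_cons.mp hl).1 x hx
    have hl' : l.Pairwise (fun a b : ℝ => b ≤ a) := (List.pairwise_cons.mp hl).2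
    by_cases hb : b ∈ s
    · have h1 : s.erase b ≤ ↑l := by
        have := Multiset.erase_le_erase b hs
        simpa using this
      have h2 := ih hl' (s.erase b) h1
      have hpos : 0 < Multiset.card s := Multiset.card_pos_iff_exists_mem.mpr ⟨b, hb⟩
      have hcard : Multiset.card s = Multiset.card (s.erase b) + 1 := by
        exact (Nat.succ_pred_eq_of_pos hpos).symm ▸ congrArg (·+1) (Multiset.card_erase_of_mem hb).symm
      rw [hcard, List.take_succ_cons, List.sum_cons]
      have : s.sum = b + (s.erase b).sum := by
        rw [← Multiset.sum_cons, Multiset.cons_erase hb]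
      rw [this]
      exact add_le_add_right h2 b
    · have hs' : s ≤ ↑l := by
        rw [Multiset.le_iff_count] at hs ⊢
        intro x
        by_cases hx : x = b
        · subst hx; simp [Multiset.count_eq_zero_of_notMem hb]
        · have := hs x
          rwa [← Multiset.cons_coe, Multiset.count_cons_of_ne hx] at this
      rcases Multiset.empty_or_exists_mem s with h0 | ⟨a, ha⟩
      · simp [h0]
      · have hal : a ∈ l := by
          have : a ∈ (↑l : Multiset ℝ) := Multiset.mem_of_le hs' ha
          simpa using this
        have h1 : s.erase a ≤ ↑l := le_trans (Multiset.erase_le a s) hs'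
        have h2 := ih hl' (s.erase a) h1
        have hpos : 0 < Multiset.card s := Multiset.card_pos_iff_exists_mem.mpr ⟨a, ha⟩
        have hcard : Multiset.card s = Multiset.card (s.erase a) + 1 := by
          exact (Nat.succ_pred_eq_of_pos hpos).symm ▸ congrArg (·+1) (Multiset.card_erase_of_mem ha).symm
        rw [hcard, List.take_succ_cons, List.sum_cons]
        have : s.sum = a + (s.erase a).sum := by
          rw [← Multiset.sum_cons, Multiset.cons_erase ha]
        rw [this]
        exact add_le_add (hlb a hal) h2

lemma image_swap {n : ℕ} {S : Finset (Fin n)} {a b : Fin n} (ha : a ∈ S) (hb : b ∉ S) :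
    S.image (Equiv.swap a b) = insert b (S.erase a) := by
  ext x
  simp only [Finset.mem_image, Finset.mem_insert, Finset.mem_erase]
  constructor
  · rintro ⟨y, hy, rfl⟩
    by_cases h1 : y = a
    · subst h1; left; rw [Equiv.swap_apply_left]
    · by_cases h2 : y = b
      · exact absurd (h2 ▸ hy) hb
      · rw [Equiv.swap_apply_of_ne_of_ne h1 h2]; exact Or.inr ⟨h1, hy⟩
  · rintro (rfl | ⟨hxa, hxS⟩)
    · exact ⟨a, ha, Equiv.swap_apply_left a x⟩
    · have hxb : x ≠ b := fun h => hb (h ▸ hxS)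
      exact ⟨x, hxS, Equiv.swap_apply_of_ne_of_ne hxa hxb⟩

lemma exists_perm_aux {n : ℕ} :
    ∀ d (S T : Finset (Fin n)), S.card = T.card → (T \ S).card = d →
      ∃ σ : Equiv.Perm (Fin n), (∀ x, x ∉ S ∪ T → σ x = x) ∧ S.image σ = T := by
  intro d
  induction d with
  | zero =>
    intro S T hcard h0
    have hTS : T ⊆ S := by
      rwa [Finset.card_eq_zero, Finset.sdiff_eq_empty_iff_subset] at h0
    have hST : S = T := (Finset.eq_of_subset_of_card_le hTS (le_of_eq hcard)).symm
    refine ⟨1, fun x _ => rfl, ?_⟩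
    subst hST
    simp
  | succ d ih =>
    intro S T hcard hd
    have hTSne : (T \ S).Nonempty := by rw [← Finset.card_pos, hd]; omega
    obtain ⟨b, hb⟩ := hTSne
    have hSTcard : (S \ T).card = d + 1 := by rw [Finset.card_sdiff_comm hcard, hd]
    have hSTne : (S \ T).Nonempty := by rw [← Finset.card_pos, hSTcard]; omega
    obtain ⟨a, ha⟩ := hSTne
    obtain ⟨haS, haT⟩ := Finset.mem_sdiff.mp ha
    obtain ⟨hbT, hbS⟩ := Finset.mem_sdiff.mp hb
    set S' := insert b (S.erase a) with hS'
    have hbe : b ∉ S.erase a := fun h => hbS (Finset.mem_of_mem_erase h)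
    have hc1 : S'.card = T.card := by
      rw [hS', Finset.card_insert_of_notMem hbe, Finset.card_erase_of_mem haS]
      have hp : 0 < S.card := Finset.card_pos.mpr ⟨a, haS⟩
      omega
    have hc2 : (T \ S').card = d := by
      have he : T \ S' = (T \ S).erase b := by
        rw [hS']
        ext x
        simp only [Finset.mem_sdiff, Finset.mem_erase, Finset.mem_insert, not_or]
        constructor
        · rintro ⟨hxT, hxb, hxe⟩
          exact ⟨hxb, hxT, fun hxS => hxe ⟨fun hxa => haT (hxa ▸ hxT), hxS⟩⟩
        · rintro ⟨hxb, hxT, hxS⟩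
          exact ⟨hxT, hxb, fun h => hxS h.2⟩
      rw [he, Finset.card_erase_of_mem hb, hd]; omega
    obtain ⟨σ', hfix', himg'⟩ := ih S' T hc1 hc2
    refine ⟨σ' * Equiv.swap a b, ?_, ?_⟩
    · intro x hx
      have hxS : x ∉ S := fun h => hx (Finset.mem_union_left _ h)
      have hxT : x ∉ T := fun h => hx (Finset.mem_union_right _ h)
      have hxa : x ≠ a := fun h => hxS (h ▸ haS)
      have hxb : x ≠ b := fun h => hxT (h ▸ hbT)
      have hxS' : x ∉ S' ∪ T := by
        simp only [hS', Finset.mem_union, Finset.mem_insert, Finset.mem_erase, not_or]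
        exact ⟨⟨hxb, fun h => hxS h.2⟩, hxT⟩
      rw [Equiv.Perm.mul_apply, Equiv.swap_apply_of_ne_of_ne hxa hxb, hfix' x hxS']
    · have : S.image ⇑(σ' * Equiv.swap a b) = (S.image (Equiv.swap a b)).image σ' := by
        rw [Finset.image_image]; rfl
      rw [this, image_swap haS hbS, ← hS', himg']

lemma exists_perm {n : ℕ} (G S T : Finset (Fin n)) (hS : S ⊆ G) (hT : T ⊆ G)
    (hcard : S.card = T.card) :
    ∃ σ : Equiv.Perm (Fin n), (∀ x ∈ G, σ x ∈ G) ∧ (∀ x ∉ G, σ x = x) ∧ S.image σ = T := by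
  obtain ⟨σ, hfix, himg⟩ := exists_perm_aux (T \ S).card S T hcard rfl
  have hstable : ∀ x ∈ S ∪ T, σ x ∈ S ∪ T := by
    intro x hx
    by_contra hc
    have h1 : σ (σ x) = σ x := hfix _ hc
    have h2 : σ x = x := σ.injective h1
    exact hc (by rw [h2]; exact hx)
  have hUG : S ∪ T ⊆ G := Finset.union_subset hS hT
  refine ⟨σ, ?_, fun x hx => hfix x (fun h => hx (hUG h)), himg⟩
  intro x hxG
  by_cases h : x ∈ S ∪ T
  · exact hUG (hstable x h)
  · rw [hfix x h]; exact hxG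


lemma list_prod_fix {n : ℕ} (l : List (Equiv.Perm (Fin n))) (i : Fin n)
    (h : ∀ σ ∈ l, σ i = i) : l.prod i = i := by
  induction l with
  | nil => rfl
  | cons σ l ih =>
    rw [List.prod_cons, Equiv.Perm.mul_apply, ih (fun τ hτ => h τ (List.mem_cons_of_mem _ hτ)),
      h σ (List.mem_cons_self)]

lemma list_prod_apply {n : ℕ} (σ : Finset (Fin n) → Equiv.Perm (Fin n)) :
    ∀ (l : List (Finset (Fin n))), l.Pairwise Disjoint →
    (∀ G ∈ l, ∀ x ∈ G, σ G x ∈ G) → (∀ G ∈ l, ∀ x ∉ G, σ G x = x) →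
    ∀ G ∈ l, ∀ i ∈ G, (l.map σ).prod i = σ G i := by
  intro l
  induction l with
  | nil => simp
  | cons H l ih =>
    intro hp hmap hfix G hG i hi
    obtain ⟨hdH, hp'⟩ := List.pairwise_cons.mp hp
    rw [List.map_cons, List.prod_cons, Equiv.Perm.mul_apply]
    rcases List.mem_cons.mp hG with rfl | hGl
    · have hfixtail : (l.map σ).prod i = i := by
        apply list_prod_fix
        intro τ hτ
        obtain ⟨G', hG', rfl⟩ := List.mem_map.mp hτ
        have : i ∉ G' := Finset.disjoint_left.mp (hdH G' hG') hi
        exact hfix G' (List.mem_cons_of_mem _ hG') i this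
      rw [hfixtail]
    · have h1 : (l.map σ).prod i = σ G i :=
        ih hp' (fun G' h' => hmap G' (List.mem_cons_of_mem _ h'))
          (fun G' h' => hfix G' (List.mem_cons_of_mem _ h')) G hGl i hi
      rw [h1]
      have h2 : σ G i ∈ G := hmap G hG i hi
      have h3 : σ G i ∉ H := Finset.disjoint_right.mp (hdH G hGl) h2
      exact hfix H (List.mem_cons_self) _ h3

lemma descList_spec {n : ℕ} (α : Fin n → ℝ) (G : Finset (Fin n)) :
    ∃ gl : List (Fin n), gl.Nodup ∧ (↑gl : Multiset (Fin n)) = G.1 ∧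
      descList α G = gl.map α := by
  classical
  set r : Fin n → Fin n → Prop := fun i j => α j < α i ∨ (α i = α j ∧ i ≤ j) with hr
  haveI : DecidableRel r := Classical.decRel r
  haveI : IsTrans (Fin n) r := by
    constructor
    intro a b c hab hbc
    rcases hab with h1 | ⟨h1, h1'⟩ <;> rcases hbc with h2 | ⟨h2, h2'⟩
    · exact Or.inl (lt_trans h2 h1)
    · exact Or.inl (h2 ▸ h1)
    · exact Or.inl (h1 ▸ h2)
    · exact Or.inr ⟨h1.trans h2, le_trans h1' h2'⟩
  haveI : Std.Antisymm r := by
    constructor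
    intro a b hab hba
    rcases hab with h1 | ⟨h1, h1'⟩ <;> rcases hba with h2 | ⟨h2, h2'⟩
    · exact absurd (lt_trans h1 h2) (lt_irrefl _)
    · exact absurd h1 (h2 ▸ lt_irrefl _)
    · exact absurd h2 (h1 ▸ lt_irrefl _)
    · exact le_antisymm h1' h2'
  haveI : Std.Total r := by
    constructor
    intro a b
    rcases lt_trichotomy (α a) (α b) with h | h | h
    · exact Or.inr (Or.inl h)
    · rcases le_total a b with h' | h'
      · exact Or.inl (Or.inr ⟨h, h'⟩)
      · exact Or.inr (Or.inr ⟨h.symm, h'⟩)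
    · exact Or.inl (Or.inl h)
  refine ⟨Multiset.sort G.1 r, ?_, Multiset.sort_eq G.1 r, ?_⟩
  · rw [← Multiset.coe_nodup, Multiset.sort_eq]; exact G.2
  · have hs1 : (Multiset.sort G.1 r).Pairwise r := Multiset.pairwise_sort G.1 r
    have hs2 : ((Multiset.sort G.1 r).map α).Pairwise (fun a b : ℝ => b ≤ a) := by
      apply List.Pairwise.map α ?_ hs1
      intro a b hab
      rcases hab with h | ⟨h, _⟩
      · exact le_of_lt h
      · exact le_of_eq h.symm
    have hs3 : (descList α G).Pairwise (fun a b : ℝ => b ≤ a) := by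
      unfold descList
      rw [List.pairwise_reverse]
      exact Multiset.pairwise_sort _ (· ≤ ·)
    have hperm : ((Multiset.sort G.1 r).map α).Perm (descList α G) := by
      rw [← Multiset.coe_eq_coe]
      unfold descList
      rw [Multiset.coe_reverse, Multiset.sort_eq, ← Multiset.map_coe, Multiset.sort_eq]
    haveI : Std.Antisymm (fun a b : ℝ => b ≤ a) := ⟨fun a b h1 h2 => le_antisymm h2 h1⟩
    exact (List.Perm.eq_of_pairwise' hs2 hs3 hperm).symm

theorem stmt6 {n : ℕ} (𝒢 : Finset (Finset (Fin n)))
    (hcover : ∀ i, ∃ G ∈ 𝒢, i ∈ G)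
    (hdisj : ∀ G ∈ 𝒢, ∀ G' ∈ 𝒢, G ≠ G' → Disjoint G G')
    (α : Fin n → ℝ) (β xhat : ℝ) (zhat : Fin n → ℝ)
    (hzhat : ∀ j, zhat j = 0 ∨ zhat j = 1) :
    (∀ π : Equiv.Perm (Fin n), (∀ G ∈ 𝒢, ∀ i ∈ G, π i ∈ G) →
        ∑ i, permAct π⁻¹ α i * zhat i + β ≤ xhat) ↔
      ∑ G ∈ 𝒢, ∑ k ∈ Finset.range G.card,
          (descList α G).getD k 0 *
            (if ((k : ℝ) + 1 ≤ ∑ j ∈ G, zhat j) then (1 : ℝ) else 0) + β ≤ xhat := by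
  classical
  -- notation
  set S : Finset (Fin n) → Finset (Fin n) := fun G => G.filter (fun j => zhat j = 1) with hSdef
  set m : Finset (Fin n) → ℕ := fun G => (S G).card with hmdef
  have hSsub : ∀ G, S G ⊆ G := fun G => Finset.filter_subset _ _
  have hmle : ∀ G : Finset (Fin n), m G ≤ G.card := fun G => Finset.card_filter_le _ _
  -- partition sum
  have hsum_split : ∀ f : Fin n → ℝ, ∑ i, f i = ∑ G ∈ 𝒢, ∑ i ∈ G, f i := by
    intro f
    have hbu : (Finset.univ : Finset (Fin n)) = 𝒢.biUnion id := by
      ext i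
      simp only [Finset.mem_univ, true_iff, Finset.mem_biUnion, id]
      exact hcover i
    have hpd : (↑𝒢 : Set (Finset (Fin n))).PairwiseDisjoint id := by
      intro G hG G' hG' hne
      exact hdisj G hG G' hG' hne
    rw [hbu, Finset.sum_biUnion hpd]
    rfl
  -- z sums
  have hsumz : ∀ G : Finset (Fin n), ∑ j ∈ G, zhat j = (m G : ℝ) := by
    intro G
    rw [← Finset.sum_filter_add_sum_filter_not G (fun j => zhat j = 1)]
    have h1 : ∑ j ∈ G.filter (fun j => zhat j = 1), zhat j = (m G : ℝ) := by
      rw [Finset.sum_congr rfl (fun j hj => (Finset.mem_filter.mp hj).2)]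
      simp [hmdef, hSdef]
    have h2 : ∑ j ∈ G.filter (fun j => ¬ zhat j = 1), zhat j = 0 := by
      apply Finset.sum_eq_zero
      intro j hj
      rcases hzhat j with h | h
      · exact h
      · exact absurd h (Finset.mem_filter.mp hj).2
    rw [h1, h2, add_zero]
  -- sortedness of descList
  have hsorted : ∀ G : Finset (Fin n), (descList α G).Pairwise (fun a b : ℝ => b ≤ a) := by
    intro G
    unfold descList
    rw [List.pairwise_reverse]
    exact Multiset.pairwise_sort _ (· ≤ ·)
  -- inner sum rewrite
  have hinner : ∀ G ∈ 𝒢, (∑ k ∈ Finset.range G.card,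
      (descList α G).getD k 0 * (if ((k : ℝ) + 1 ≤ ∑ j ∈ G, zhat j) then (1:ℝ) else 0))
      = ((descList α G).take (m G)).sum := by
    intro G _
    rw [sum_take_eq_range]
    have h1 : ∀ k ∈ Finset.range G.card, (descList α G).getD k 0 *
        (if ((k : ℝ) + 1 ≤ ∑ j ∈ G, zhat j) then (1:ℝ) else 0)
        = if k < m G then (descList α G).getD k 0 else 0 := by
      intro k _
      rw [hsumz G]
      have hiff : ((k : ℝ) + 1 ≤ (m G : ℝ)) ↔ k < m G := by
        rw [show ((k:ℝ)+1) = ((k+1 : ℕ) : ℝ) by push_cast; ring, Nat.cast_le]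
        omega
      by_cases h : k < m G
      · rw [if_pos h, if_pos (hiff.mpr h), mul_one]
      · rw [if_neg h, if_neg (fun hc => h (hiff.mp hc)), mul_zero]
    rw [Finset.sum_congr rfl h1, ← Finset.sum_filter]
    congr 1
    ext k
    simp only [Finset.mem_filter, Finset.mem_range]
    have := hmle G
    omega
  -- upper bound for subsets
  have hub : ∀ (G : Finset (Fin n)), ∀ U ⊆ G, ∑ j ∈ U, α j ≤ ((descList α G).take U.card).sum := by
    intro G U hU
    have hle : (U.1.map α : Multiset ℝ) ≤ ↑(descList α G) := by
      have hco : (↑(descList α G) : Multiset ℝ) = G.1.map α := by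
        unfold descList
        rw [Multiset.coe_reverse, Multiset.sort_eq]
      rw [hco]
      exact Multiset.map_le_map (Finset.val_le_iff.mpr hU)
    have h := sum_le_take _ (hsorted G) _ hle
    rw [Multiset.card_map] at h
    exact h
  -- optimal subsets T
  have hTex : ∀ G : Finset (Fin n), ∃ T, T ⊆ G ∧ T.card = m G ∧
      ∑ j ∈ T, α j = ((descList α G).take (m G)).sum := by
    intro G
    obtain ⟨gl, hnodup, hcoe, hdesc⟩ := descList_spec α G
    have hglen : gl.length = G.card := by
      rw [← Multiset.coe_card, hcoe]; rfl
    have hnd : (gl.take (m G)).Nodup := hnodup.sublist (List.take_sublist _ _)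
    refine ⟨(gl.take (m G)).toFinset, ?_, ?_, ?_⟩
    · intro x hx
      have hx1 : x ∈ gl := List.mem_of_mem_take (List.mem_toFinset.mp hx)
      have hx2 : x ∈ (↑gl : Multiset (Fin n)) := hx1
      rw [hcoe] at hx2
      exact hx2
    · rw [List.toFinset_card_of_nodup hnd, List.length_take, hglen]
      exact min_eq_left (hmle G)
    · rw [List.sum_toFinset _ hnd, hdesc]
      simp [List.map_take]
  choose T hTsub hTcard hTsum using hTex
  -- evaluation of LHS for block-preserving π
  have heval : ∀ π : Equiv.Perm (Fin n), (∀ G ∈ 𝒢, ∀ i ∈ G, π i ∈ G) →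
      ∑ i, permAct π⁻¹ α i * zhat i = ∑ G ∈ 𝒢, ∑ j ∈ (S G).image π, α j := by
    intro π hπ
    rw [hsum_split]
    apply Finset.sum_congr rfl
    intro G hG
    have h1 : ∑ i ∈ G, permAct π⁻¹ α i * zhat i = ∑ i ∈ S G, α (π i) := by
      rw [← Finset.sum_filter_add_sum_filter_not G (fun j => zhat j = 1)]
      have h2 : ∑ i ∈ G.filter (fun j => ¬ zhat j = 1), permAct π⁻¹ α i * zhat i = 0 :=
        Finset.sum_eq_zero (fun i hi => by
          rcases hzhat i with h0 | h0
          · rw [h0, mul_zero]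
          · exact absurd h0 (Finset.mem_filter.mp hi).2)
      rw [h2, add_zero]
      apply Finset.sum_congr rfl
      intro i hi
      rw [(Finset.mem_filter.mp hi).2, mul_one]
      simp [permAct]
    rw [h1, Finset.sum_image (fun x _ y _ hxy => π.injective hxy)]
  constructor
  · -- forward: build optimal permutation
    intro h
    have hσex : ∀ G : Finset (Fin n), ∃ σ : Equiv.Perm (Fin n),
        (∀ x ∈ G, σ x ∈ G) ∧ (∀ x ∉ G, σ x = x) ∧ (S G).image σ = T G :=
      fun G => exists_perm G (S G) (T G) (hSsub G) (hTsub G) (hTcard G).symm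
    choose σ hσ1 hσ2 hσ3 using hσex
    set π := (𝒢.toList.map σ).prod with hπdef
    have hπeq : ∀ G ∈ 𝒢, ∀ i ∈ G, π i = σ G i := by
      intro G hG i hi
      apply list_prod_apply σ 𝒢.toList ?_ ?_ ?_ G (by rwa [Finset.mem_toList]) i hi
      · refine List.Pairwise.imp_of_mem ?_ (Finset.nodup_toList 𝒢)
        intro a b ha hb hne
        exact hdisj a (Finset.mem_toList.mp ha) b (Finset.mem_toList.mp hb) hne
      · exact fun G' _ => hσ1 G'
      · exact fun G' _ => hσ2 G'
    have hπblock : ∀ G ∈ 𝒢, ∀ i ∈ G, π i ∈ G := by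
      intro G hG i hi
      rw [hπeq G hG i hi]
      exact hσ1 G i hi
    have himage : ∀ G ∈ 𝒢, (S G).image π = T G := by
      intro G hG
      rw [Finset.image_congr (fun x hx => hπeq G hG x (hSsub G hx)), hσ3 G]
    have hval := h π hπblock
    rw [heval π hπblock] at hval
    have hchain : ∑ G ∈ 𝒢, ∑ k ∈ Finset.range G.card,
        (descList α G).getD k 0 * (if ((k : ℝ) + 1 ≤ ∑ j ∈ G, zhat j) then (1:ℝ) else 0)
        = ∑ G ∈ 𝒢, ∑ j ∈ (S G).image π, α j := by
      apply Finset.sum_congr rfl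
      intro G hG
      rw [hinner G hG, himage G hG, hTsum G]
    rw [hchain]
    exact hval
  · -- backward
    intro h π hπ
    rw [heval π hπ]
    have hle : ∑ G ∈ 𝒢, ∑ j ∈ (S G).image π, α j ≤ ∑ G ∈ 𝒢, ((descList α G).take (m G)).sum := by
      apply Finset.sum_le_sum
      intro G hG
      have hsub : (S G).image π ⊆ G := by
        intro x hx
        obtain ⟨y, hy, rfl⟩ := Finset.mem_image.mp hx
        exact hπ G hG y (hSsub G hy)
      have hcard : ((S G).image π).card = m G := by
        rw [Finset.card_image_of_injective _ π.injective]
      have := hub G _ hsub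
      rwa [hcard] at this
    have hrhs : ∑ G ∈ 𝒢, ((descList α G).take (m G)).sum
        = ∑ G ∈ 𝒢, ∑ k ∈ Finset.range G.card,
          (descList α G).getD k 0 * (if ((k : ℝ) + 1 ≤ ∑ j ∈ G, zhat j) then (1:ℝ) else 0) :=
      (Finset.sum_congr rfl hinner).symm
    linarith [hrhs ▸ hle]
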